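/- Let 0 < L ≤ U be reals, and let Q : ℝ → ℝ be monotone (nondecreasing) with L·x ≤ Q(x) ≤ U·x for all x ∈ [0,1]. Let k, r, C be naturals with k ≤ r, set m = r − k, and let w ∈ [0,1). Define θ = max 0 (1 − U·w/L) and, for θ' ∈ [0,1], E(θ') = ∑_{j=0}^{C} min(j, m) · (C choose j) · θ'^j · (1 − θ')^{C − j}. Then ((∫_w^1 Q(t) dt) / (1 − w)) · (k + E(1 − w)) ≥ (L · (1 + L·w/U) / 2) · (k + E(θ)). (This is the conditional form, given that the (k+1)-th largest non-colluding uniform order statistic equals w, of the minorant of the expected Hybrid-VCG welfare in Lemma 4.6.) -/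
import Mathlib


/-- `E[min(Binomial(C, θ'), m)] = ∑_{j=0}^{C} min(j, m) (C choose j) θ'^j (1-θ')^(C-j)`,
the expected number of items sold to colluders at a posted price with qualification
probability `θ'` and capacity `m`. -/
noncomputable def binExp (C m : ℕ) (θ' : ℝ) : ℝ :=
  ∑ j ∈ Finset.range (C + 1),
    ((min j m : ℕ) : ℝ) * (C.choose j : ℝ) * θ' ^ j * (1 - θ') ^ (C - j)

noncomputable def bs (C : ℕ) (f : ℕ → ℝ) (p : ℝ) : ℝ :=
  ∑ j ∈ Finset.range (C + 1), f j * (C.choose j : ℝ) * p ^ j * (1 - p) ^ (C - j)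

lemma bs_succ (C : ℕ) (f : ℕ → ℝ) (p : ℝ) :
    bs (C + 1) f p = p * bs C (fun j => f (j + 1)) p + (1 - p) * bs C f p := by
  unfold bs
  rw [Finset.sum_range_succ' _ (C + 1)]
  have h1 : ∀ j ∈ Finset.range (C + 1),
      f (j+1) * ((C+1).choose (j+1) : ℝ) * p ^ (j+1) * (1 - p) ^ (C + 1 - (j+1)) =
      p * (f (j+1) * (C.choose j : ℝ) * p ^ j * (1 - p) ^ (C - j)) +
      f (j+1) * (C.choose (j+1) : ℝ) * p ^ (j+1) * (1 - p) ^ (C - j) := by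
    intro j hj
    have h : C + 1 - (j + 1) = C - j := by omega
    rw [h, Nat.choose_succ_succ]
    push_cast
    simp only [Nat.succ_eq_add_one]
    ring
  rw [Finset.sum_congr rfl h1, Finset.sum_add_distrib, ← Finset.mul_sum]
  have h2 : (∑ j ∈ Finset.range (C + 1),
      f (j+1) * (C.choose (j+1) : ℝ) * p ^ (j+1) * (1 - p) ^ (C - j)) +
      f 0 * ((C+1).choose 0 : ℝ) * p ^ 0 * (1 - p) ^ (C + 1 - 0) =
      (1 - p) * ∑ j ∈ Finset.range (C + 1), f j * (C.choose j : ℝ) * p ^ j * (1 - p) ^ (C - j) := by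
    conv_rhs => rw [Finset.sum_range_succ' _ C]
    rw [Finset.sum_range_succ]
    simp only [Nat.choose_succ_self, Nat.cast_zero, mul_zero, zero_mul, add_zero,
      mul_add, Finset.mul_sum]
    congr 1
    · apply Finset.sum_congr rfl
      intro j hj
      rw [Finset.mem_range] at hj
      have h : C - j = (C - (j+1)) + 1 := by omega
      rw [h]
      ring
    · simp only [Nat.choose_zero_right, Nat.cast_one, pow_zero, Nat.sub_zero]
      ring
  rw [add_assoc, h2]

lemma bs_le_bs (C : ℕ) (f g : ℕ → ℝ) (p : ℝ) (hp : 0 ≤ p) (hp1 : p ≤ 1)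
    (h : ∀ j, f j ≤ g j) : bs C f p ≤ bs C g p := by
  apply Finset.sum_le_sum
  intro j hj
  have h1 : (0:ℝ) ≤ 1 - p := by linarith
  have := h j
  gcongr

lemma bs_nonneg (C : ℕ) (f : ℕ → ℝ) (p : ℝ) (hp : 0 ≤ p) (hp1 : p ≤ 1)
    (h : ∀ j, 0 ≤ f j) : 0 ≤ bs C f p := by
  apply Finset.sum_nonneg
  intro j hj
  have h1 : (0:ℝ) ≤ 1 - p := by linarith
  have := h j
  positivity

lemma bs_mono (f : ℕ → ℝ) (hf : Monotone f) :
    ∀ C : ℕ, ∀ p q : ℝ, 0 ≤ p → p ≤ q → q ≤ 1 → bs C f p ≤ bs C f q := by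
  intro C
  induction C generalizing f with
  | zero => intro p q _ _ _; simp [bs]
  | succ C ih =>
    intro p q hp hpq hq1
    have hfs : Monotone (fun j => f (j + 1)) := fun a b hab => hf (by omega)
    have hA : bs C (fun j => f (j+1)) p ≤ bs C (fun j => f (j+1)) q := ih _ hfs p q hp hpq hq1
    have hB : bs C f p ≤ bs C f q := ih _ hf p q hp hpq hq1
    have hBA : bs C f q ≤ bs C (fun j => f (j+1)) q :=
      bs_le_bs C _ _ q (le_trans hp hpq) hq1 (fun j => hf (Nat.le_succ j))
    rw [bs_succ, bs_succ]
    nlinarith [hA, hB, hBA]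

lemma binExp_eq (C m : ℕ) (p : ℝ) : binExp C m p = bs C (fun j => ((min j m : ℕ) : ℝ)) p := rfl

lemma binExp_mono (C m : ℕ) (p q : ℝ) (hp : 0 ≤ p) (hpq : p ≤ q) (hq1 : q ≤ 1) :
    binExp C m p ≤ binExp C m q := by
  rw [binExp_eq, binExp_eq]
  apply bs_mono _ _ C p q hp hpq hq1
  intro a b hab
  exact_mod_cast Nat.cast_le.mpr (min_le_min hab le_rfl)

lemma binExp_nonneg (C m : ℕ) (p : ℝ) (hp : 0 ≤ p) (hp1 : p ≤ 1) : 0 ≤ binExp C m p := by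
  rw [binExp_eq]
  exact bs_nonneg C _ p hp hp1 (fun j => by positivity)


/-- Conditional form (given that the `(k+1)`-th largest non-colluding uniform order
statistic equals `w`) of the minorant of the expected Hybrid-VCG welfare: with
`m = r - k` and `θ = max 0 (1 - U·w/L)`,
`(∫_w^1 Q)/(1-w) · (k + E(1-w)) ≥ L(1 + L·w/U)/2 · (k + E(θ))`. -/
theorem stmt_15 (L U : ℝ) (hL : 0 < L) (hLU : L ≤ U)
    (Q : ℝ → ℝ) (hQmono : Monotone Q)
    (hQ : ∀ x ∈ Set.Icc (0 : ℝ) 1, L * x ≤ Q x ∧ Q x ≤ U * x)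
    (k r C : ℕ) (hkr : k ≤ r) (w : ℝ) (hw : w ∈ Set.Ico (0 : ℝ) 1) :
    ((∫ t in w..1, Q t) / (1 - w)) * ((k : ℝ) + binExp C (r - k) (1 - w)) ≥
      (L * (1 + L * w / U) / 2) *
        ((k : ℝ) + binExp C (r - k) (max 0 (1 - U * w / L))) := by
  obtain ⟨hw0, hw1⟩ := hw
  have hU : (0:ℝ) < U := lt_of_lt_of_le hL hLU
  have h1w : (0:ℝ) < 1 - w := by linarith
  set θ : ℝ := max 0 (1 - U * w / L) with hθdef
  have hθ0 : 0 ≤ θ := le_max_left _ _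
  have hwθ : w ≤ U * w / L := by
    rw [le_div_iff₀ hL]; nlinarith
  have hθle : θ ≤ 1 - w := by
    apply max_le (by linarith)
    linarith
  -- E monotonicity
  have hE : binExp C (r - k) θ ≤ binExp C (r - k) (1 - w) :=
    binExp_mono _ _ _ _ hθ0 hθle (by linarith)
  have hE2 : 0 ≤ binExp C (r - k) θ :=
    binExp_nonneg _ _ _ hθ0 (by linarith)
  -- integral bound
  have hIntQ : IntervalIntegrable Q MeasureTheory.volume w 1 := hQmono.intervalIntegrable
  have hIlow : (∫ t in w..1, L * t) ≤ ∫ t in w..1, Q t := by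
    apply intervalIntegral.integral_mono_on (le_of_lt hw1) ((continuous_const.mul continuous_id).intervalIntegrable _ _) hIntQ
    intro t ht
    exact (hQ t ⟨le_trans hw0 ht.1, ht.2⟩).1
  have hIval : (∫ t in w..1, L * t) = L * ((1 - w^2) / 2) := by
    rw [intervalIntegral.integral_const_mul, integral_id]
    ring
  have hA : L * (1 + L * w / U) / 2 ≤ (∫ t in w..1, Q t) / (1 - w) := by
    rw [le_div_iff₀ h1w]
    have hlwu : L * w / U ≤ w := by
      rw [div_le_iff₀ hU]; nlinarith
    nlinarith [hIlow, hIval, mul_nonneg (mul_nonneg hL.le h1w.le) (sub_nonneg.mpr hlwu)]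
  have hBnn : 0 ≤ L * (1 + L * w / U) / 2 := by positivity
  have hAnn : 0 ≤ (∫ t in w..1, Q t) / (1 - w) := le_trans hBnn hA
  have hkE2 : (0:ℝ) ≤ (k : ℝ) + binExp C (r - k) θ := by positivity
  exact mul_le_mul hA (by linarith) hkE2 hAnn
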